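/- Let G be a connected d-regular graph on n vertices whose additive spectral gap δ = d − λ₂ satisfies δ > (2/c)·sqrt(n) + 2 for some 0 < c < 1. Let e be an edge added to or removed from G (with the result connected). Then the principal ratio satisfies γ(G ± e) < (1+c)/(1−c). -/

import Mathlib

open SimpleGraph Matrix Finset

lemma aux_eps {ε x y : ℝ} (hε : ε = 1 ∨ ε = -1) (hy : 0 ≤ y) : ε * (x * y) ≤ |x| * y := by
  rcases hε with rfl | rfl
  · have := le_abs_self x; nlinarith
  · have := neg_abs_le x; nlinarith

lemma aux_cs {za zb qa qb M : ℝ} (ha : 0 < qa) (hb : 0 < qb) (hMa : qa ≤ M) (hMb : qb ≤ M) :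
    (|za| * qb + |zb| * qa)^2 ≤ (za * za + zb * zb) * (2 * M^2) := by
  have ha2 : |za|^2 = za * za := by rw [sq_abs]; ring
  have hb2 : |zb|^2 = zb * zb := by rw [sq_abs]; ring
  have h1 : (|za| * qb + |zb| * qa)^2 ≤ (za * za + zb * zb) * (qa^2 + qb^2) := by
    nlinarith [sq_nonneg (|za| * qa - |zb| * qb)]
  have h2 : qa^2 + qb^2 ≤ 2 * M^2 := by nlinarith
  have h3 : 0 ≤ za * za + zb * zb := by nlinarith [mul_self_nonneg za, mul_self_nonneg zb]
  calc (|za| * qb + |zb| * qa)^2 ≤ (za * za + zb * zb) * (qa^2 + qb^2) := h1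
    _ ≤ (za * za + zb * zb) * (2 * M^2) := mul_le_mul_of_nonneg_left h2 h3

lemma aux_zm {K Z W M2 : ℝ} (hK : 0 < K) (hZ : 0 ≤ Z) (hKZW : K * Z ≤ W)
    (hW2 : W ^ 2 ≤ Z * M2) (hM2 : 0 ≤ M2) : K ^ 2 * Z ≤ M2 := by
  rcases eq_or_lt_of_le hZ with hZe | hZp
  · rw [← hZe]; simpa using hM2
  · have h5 : (K * Z) * (K * Z) ≤ W * W :=
      mul_self_le_mul_self (mul_nonneg hK.le hZ) hKZW
    nlinarith [h5, hW2, hZp]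

lemma aux_lin {K zx S M : ℝ} (hsq : (K * zx)^2 ≤ 2 * M^2) (hS2 : S^2 = 2)
    (hSM : 0 ≤ S * M) : K * zx ≤ S * M ∧ -(S * M) ≤ K * zx := by
  constructor
  · nlinarith [sq_nonneg (K * zx + S * M)]
  · nlinarith [sq_nonneg (K * zx - S * M)]

lemma aux_arith {K S c : ℝ} (hc0 : 0 < c) (hc1 : c < 1) (hS0 : 0 < S)
    (hKc : 2 * S < K * c) : 0 < K ∧ S < K := by
  have hK0 : 0 < K := by nlinarith
  exact ⟨hK0, by nlinarith⟩

lemma aux_final {K S c β M qi qj : ℝ} (hc0 : 0 < c) (hc1 : c < 1) (hS0 : 0 < S)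
    (hKc : 2 * S < K * c) (hβ : 0 < β) (hM : 0 < M)
    (h1 : (K - S) * M ≤ K * β) (h2 : K * β - S * M ≤ K * qj) (hqi : qi ≤ M) :
    qi * (1 - c) < (1 + c) * qj := by
  obtain ⟨hKpos, hKS⟩ := aux_arith hc0 hc1 hS0 hKc
  have hfin : K * (qi * (1 - c)) < K * ((1 + c) * qj) := by
    nlinarith [mul_le_mul_of_nonneg_left h2 (show (0:ℝ) ≤ 1 + c by linarith),
      mul_le_mul_of_nonneg_left h1 (show (0:ℝ) ≤ 1 + c by linarith),
      mul_le_mul_of_nonneg_left hqi (mul_nonneg hKpos.le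
        (show (0:ℝ) ≤ 1 - c by linarith)),
      mul_pos hM (show (0:ℝ) < K * c - S * (1 + c) by nlinarith)]
  exact lt_of_mul_lt_mul_left hfin hKpos.le

lemma aux_r1 {K S M β : ℝ} (h : K * (M - β) ≤ S * M) : (K - S) * M ≤ K * β := by nlinarith
lemma aux_r2 {K S M β qj : ℝ} (h : -(S * M) ≤ K * (qj - β)) : K * β - S * M ≤ K * qj := by
  nlinarith


lemma aux_perron {n d : ℕ} (G : SimpleGraph (Fin n)) [DecidableRel G.Adj]
    (hG : G.Connected) (hreg : G.IsRegularOfDegree d) (v : Fin n → ℝ)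
    (hv : G.adjMatrix ℝ *ᵥ v = (d : ℝ) • v) : ∀ i j : Fin n, v i = v j := by
  have hne : Nonempty (Fin n) := hG.nonempty
  obtain ⟨i0, hmax⟩ := Finite.exists_max v
  have step : ∀ i : Fin n, v i = v i0 → ∀ j : Fin n, G.Adj i j → v j = v i0 := by
    intro i hi j hadj
    have h1 := congrFun hv i
    simp only [adjMatrix_mulVec_apply, Pi.smul_apply, smul_eq_mul] at h1
    have hcard : (G.neighborFinset i).card = d := hreg i
    have hrow : ∑ k ∈ G.neighborFinset i, v k = ∑ k ∈ G.neighborFinset i, v i0 := by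
      rw [h1, Finset.sum_const, hcard, hi, nsmul_eq_mul]
    have := (Finset.sum_eq_sum_iff_of_le (fun k _ => hmax k)).mp hrow
    exact this j (by simpa [SimpleGraph.mem_neighborFinset] using hadj)
  have key : ∀ (x y : Fin n) (w : G.Walk x y), v x = v i0 → v y = v i0 := by
    intro x y w
    induction w with
    | nil => exact id
    | cons h p ih => exact fun hx => ih (step _ hx _ h)
  intro i j
  obtain ⟨wi⟩ := hG.preconnected i0 i
  obtain ⟨wj⟩ := hG.preconnected i0 j
  rw [key i0 i wi rfl, key i0 j wj rfl]


lemma aux_quad {n : ℕ} (A : Matrix (Fin n) (Fin n) ℝ) (hA : A.IsHermitian) (t μ : ℝ)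
    (hev : ∀ (lam : ℝ) (v : Fin n → ℝ), v ≠ 0 → A *ᵥ v = lam • v →
      lam ≤ t ∨ ∀ i j : Fin n, v i = v j)
    (z : Fin n → ℝ) (hz : ∑ i, z i = 0) :
    (μ - t) * (∑ i, z i * z i) ≤ ∑ i, z i * (μ * z i - (A *ᵥ z) i) := by
  classical
  set b := hA.eigenvectorBasis with hb
  set ev := hA.eigenvalues with hev'
  let Z : EuclideanSpace ℝ (Fin n) := WithLp.toLp 2 z
  have hZ : ∀ i, Z i = z i := fun _ => rfl
  have hinner : ∀ (x y : EuclideanSpace ℝ (Fin n)), (inner ℝ x y : ℝ) = ∑ i, x i * y i := by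
    intro x y
    simp [PiLp.inner_apply, RCLike.inner_apply, mul_comm]
  set c : Fin n → ℝ := fun i => ∑ j, (b i : Fin n → ℝ) j * z j with hc
  have hcin : ∀ i, (inner ℝ (b i) Z : ℝ) = c i := fun i => hinner _ _
  have hcin' : ∀ i, (inner ℝ Z (b i) : ℝ) = c i := by
    intro i; rw [real_inner_comm]; exact hcin i
  -- Parseval
  have hpars : ∑ i, c i * c i = ∑ i, z i * z i := by
    have h := b.sum_inner_mul_inner Z Z
    rw [hinner Z Z] at h
    simp only [hcin, hcin'] at h
    exact h
  have hAspec : ∀ i, A *ᵥ (b i : Fin n → ℝ) = ev i • (b i : Fin n → ℝ) := fun i =>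
    hA.mulVec_eigenvectorBasis i
  have hsym : ∀ x y : Fin n, A x y = A y x := by
    intro x y
    have := congrFun (congrFun hA.eq x) y
    simpa [Matrix.conjTranspose_apply] using this.symm
  -- z ⬝ Az
  have hAz : ∑ i, z i * (A *ᵥ z) i = ∑ i, ev i * (c i * c i) := by
    have h2 := b.sum_inner_mul_inner Z (WithLp.toLp 2 (A *ᵥ z) : EuclideanSpace ℝ (Fin n))
    rw [hinner Z _] at h2
    have h3 : ∀ i, (inner ℝ (b i) (WithLp.toLp 2 (A *ᵥ z) : EuclideanSpace ℝ (Fin n)) : ℝ)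
        = ev i * c i := by
      intro i
      rw [hinner]
      have e1 : ∑ j, (b i : Fin n → ℝ) j * (A *ᵥ z) j
          = ∑ j, (A *ᵥ (b i : Fin n → ℝ)) j * z j := by
        simp only [Matrix.mulVec, dotProduct, Finset.sum_mul, Finset.mul_sum]
        rw [Finset.sum_comm]
        apply Finset.sum_congr rfl
        intro x _
        apply Finset.sum_congr rfl
        intro y _
        rw [hsym y x]; ring
      rw [e1, hAspec i]
      simp only [hc, Finset.mul_sum]
      apply Finset.sum_congr rfl
      intro j _
      have : (ev i • (b i : Fin n → ℝ)) j = ev i * (b i : Fin n → ℝ) j := rfl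
      rw [this]
      ring
    simp only [h3, hcin'] at h2
    rw [← h2]
    apply Finset.sum_congr rfl; intro i _; ring
  have hexp : ∑ i, z i * (μ * z i - (A *ᵥ z) i)
      = ∑ i, (μ - ev i) * (c i * c i) := by
    have e : ∑ i, z i * (μ * z i - (A *ᵥ z) i)
        = μ * (∑ i, z i * z i) - ∑ i, z i * (A *ᵥ z) i := by
      rw [Finset.mul_sum, ← Finset.sum_sub_distrib]
      apply Finset.sum_congr rfl; intro i _; ring
    rw [e, hAz, ← hpars, Finset.mul_sum, ← Finset.sum_sub_distrib]
    apply Finset.sum_congr rfl; intro i _; ring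
  rw [hexp, ← hpars, Finset.mul_sum]
  apply Finset.sum_le_sum
  intro i _
  rcases eq_or_ne (c i) 0 with h0 | h0
  · simp [h0]
  · have hbne : (⇑(b i) : Fin n → ℝ) ≠ 0 := by
      intro hcontra
      apply h0
      show ∑ j, (b i : Fin n → ℝ) j * z j = 0
      simp only [show ∀ j, (b i : Fin n → ℝ) j = 0 from fun j => congrFun hcontra j,
        zero_mul, Finset.sum_const_zero]
    rcases hev (ev i) (b i) hbne (hAspec i) with h | h
    · have hpos : 0 < c i * c i := by
        rcases lt_or_gt_of_ne h0 with h' | h'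
        · nlinarith
        · nlinarith
      nlinarith
    · exfalso
      apply h0
      have hne : Nonempty (Fin n) := by
        rcases isEmpty_or_nonempty (Fin n) with he | h'
        · exact absurd (by simp [hc]) h0
        · exact h'
      show ∑ j, (b i : Fin n → ℝ) j * z j = 0
      set k := (b i : Fin n → ℝ) (Classical.arbitrary (Fin n)) with hk
      have : ∀ j, (b i : Fin n → ℝ) j = k := fun j => h j _
      calc ∑ j, (b i : Fin n → ℝ) j * z j = ∑ j, k * z j := by
            apply Finset.sum_congr rfl; intro j _; rw [this j]
        _ = k * ∑ j, z j := by rw [Finset.mul_sum]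
        _ = 0 := by rw [hz, mul_zero]


/-- Let `G` be a connected `d`-regular graph on `n` vertices whose additive spectral
gap `δ = d − λ₂` satisfies `δ > (2/c)√n + 2` for some `0 < c < 1` (expressed as: every
eigenvalue of `G` is either `d` or at most `d − δ`). Let `H` be obtained from `G` by
adding a non-edge or deleting a (non-bridge) edge, `H` connected. Then the principal
ratio of `H` satisfies `γ(H) < (1+c)/(1−c)`. -/
theorem stmt_19 {n d : ℕ} (G : SimpleGraph (Fin n)) [DecidableRel G.Adj]
    (hG : G.Connected) (hreg : G.IsRegularOfDegree d)
    (δ c : ℝ) (hc0 : 0 < c) (hc1 : c < 1)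
    (hgap : ∀ (μ : ℝ) (v : Fin n → ℝ), v ≠ 0 → G.adjMatrix ℝ *ᵥ v = μ • v →
      μ = d ∨ μ ≤ d - δ)
    (hδ : δ > 2 / c * Real.sqrt n + 2)
    (H : SimpleGraph (Fin n)) [DecidableRel H.Adj]
    (hH : (∃ a b : Fin n, a ≠ b ∧ ¬ G.Adj a b ∧
            H = G ⊔ SimpleGraph.fromEdgeSet {s(a, b)}) ∨
          (∃ a b : Fin n, G.Adj a b ∧ H = G.deleteEdges {s(a, b)}))
    (hHconn : H.Connected)
    (μ : ℝ) (q : Fin n → ℝ) (hpos : ∀ w, 0 < q w)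
    (heig : H.adjMatrix ℝ *ᵥ q = μ • q) :
    ∀ i j : Fin n, q i / q j < (1 + c) / (1 - c) := by
  classical
  intro i j
  have hne : Nonempty (Fin n) := hHconn.nonempty
  have hn0 : 0 < n := by
    rcases hne with ⟨x⟩; exact Fin.pos x
  -- STEP 1: extract the perturbation structure
  obtain ⟨a, b, hab, ε, hεc, hd, hdeg⟩ :
      ∃ a b : Fin n, a ≠ b ∧ ∃ ε : ℝ, (ε = 1 ∨ ε = -1) ∧
        (∀ x, (H.adjMatrix ℝ *ᵥ q) x = (G.adjMatrix ℝ *ᵥ q) x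
          + (if x = a then ε * q b else 0) + (if x = b then ε * q a else 0)) ∧
        (∀ x : Fin n, d ≤ (H.neighborFinset x).card + 2) := by
    rcases hH with ⟨a, b, hab, hnadj, hHe⟩ | ⟨a, b, hadj, hHe⟩
    · refine ⟨a, b, hab, 1, Or.inl rfl, ?_, ?_⟩
      · have hAdj : ∀ x y, H.Adj x y ↔ (G.Adj x y ∨ (x = a ∧ y = b) ∨ (x = b ∧ y = a)) := by
          intro x y
          rw [hHe]
          simp only [SimpleGraph.sup_adj, SimpleGraph.fromEdgeSet_adj, Set.mem_singleton_iff,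
            Sym2.eq_iff]
          constructor
          · rintro (h | ⟨(⟨rfl, rfl⟩ | ⟨rfl, rfl⟩), hne'⟩) <;> tauto
          · rintro (h | ⟨rfl, rfl⟩ | ⟨rfl, rfl⟩)
            · tauto
            · exact Or.inr ⟨Or.inl ⟨rfl, rfl⟩, hab⟩
            · exact Or.inr ⟨Or.inr ⟨rfl, rfl⟩, hab.symm⟩
        intro x
        rw [SimpleGraph.adjMatrix_mulVec_apply, SimpleGraph.adjMatrix_mulVec_apply]
        by_cases hxa : x = a
        · subst hxa
          have hN : H.neighborFinset x = insert b (G.neighborFinset x) := by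
            ext u
            simp only [SimpleGraph.mem_neighborFinset, hAdj, Finset.mem_insert]
            aesop
          rw [hN, Finset.sum_insert (by simpa [SimpleGraph.mem_neighborFinset] using hnadj)]
          simp [hab, Ne.symm hab]
          ring
        · by_cases hxb : x = b
          · subst hxb
            have hN : H.neighborFinset x = insert a (G.neighborFinset x) := by
              ext u
              simp only [SimpleGraph.mem_neighborFinset, hAdj, Finset.mem_insert]
              aesop
            have hnadj' : ¬ G.Adj x a := fun h => hnadj h.symm
            rw [hN, Finset.sum_insert (by simpa [SimpleGraph.mem_neighborFinset] using hnadj')]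
            simp [hxa, hab, Ne.symm hab]
            ring
          · have hN : H.neighborFinset x = G.neighborFinset x := by
              ext u
              simp only [SimpleGraph.mem_neighborFinset, hAdj]
              aesop
            rw [hN]
            simp [hxa, hxb]
      · intro x
        have hsub : G.neighborFinset x ⊆ H.neighborFinset x := by
          intro u hu
          rw [SimpleGraph.mem_neighborFinset] at hu ⊢
          rw [hHe]
          exact Or.inl hu
        calc d = (G.neighborFinset x).card := (hreg x).symm
          _ ≤ (H.neighborFinset x).card := Finset.card_le_card hsub
          _ ≤ (H.neighborFinset x).card + 2 := Nat.le_add_right _ _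
    · have hab : a ≠ b := G.ne_of_adj hadj
      refine ⟨a, b, hab, -1, Or.inr rfl, ?_, ?_⟩
      · have hAdj : ∀ x y, H.Adj x y ↔ (G.Adj x y ∧ ¬((x = a ∧ y = b) ∨ (x = b ∧ y = a))) := by
          intro x y
          rw [hHe]
          simp only [SimpleGraph.deleteEdges_adj, Set.mem_singleton_iff, Sym2.eq_iff]
        intro x
        rw [SimpleGraph.adjMatrix_mulVec_apply, SimpleGraph.adjMatrix_mulVec_apply]
        by_cases hxa : x = a
        · subst hxa
          have hN : H.neighborFinset x = (G.neighborFinset x).erase b := by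
            ext u
            simp only [SimpleGraph.mem_neighborFinset, hAdj, Finset.mem_erase]
            aesop
          rw [hN, Finset.sum_erase_eq_sub (by simpa [SimpleGraph.mem_neighborFinset] using hadj)]
          simp [hab, Ne.symm hab]
          ring
        · by_cases hxb : x = b
          · subst hxb
            have hN : H.neighborFinset x = (G.neighborFinset x).erase a := by
              ext u
              simp only [SimpleGraph.mem_neighborFinset, hAdj, Finset.mem_erase]
              aesop
            rw [hN, Finset.sum_erase_eq_sub
              (by simpa [SimpleGraph.mem_neighborFinset] using hadj.symm)]
            simp [hxa, hab, Ne.symm hab]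
            ring
          · have hN : H.neighborFinset x = G.neighborFinset x := by
              ext u
              simp only [SimpleGraph.mem_neighborFinset, hAdj]
              aesop
            rw [hN]
            simp [hxa, hxb]
      · intro x
        have hsub : (G.neighborFinset x) \ {a, b} ⊆ H.neighborFinset x := by
          intro u hu
          rw [Finset.mem_sdiff] at hu
          obtain ⟨hu1, hu2⟩ := hu
          rw [SimpleGraph.mem_neighborFinset] at hu1 ⊢
          rw [hHe]
          simp only [SimpleGraph.deleteEdges_adj, Set.mem_singleton_iff, Sym2.eq_iff]
          refine ⟨hu1, ?_⟩
          rintro (⟨rfl, rfl⟩ | ⟨rfl, rfl⟩) <;>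
            simp_all [Finset.mem_insert, Finset.mem_singleton]
        calc d = (G.neighborFinset x).card := (hreg x).symm
          _ ≤ ((G.neighborFinset x) \ {a, b}).card + ({a, b} : Finset (Fin n)).card :=
            Finset.card_le_card_sdiff_add_card
          _ ≤ (H.neighborFinset x).card + 2 := by
            have h1 : ((G.neighborFinset x) \ {a, b}).card ≤ (H.neighborFinset x).card :=
              Finset.card_le_card hsub
            have h2 : ({a, b} : Finset (Fin n)).card ≤ 2 := Finset.card_insert_le _ _ |>.trans
              (by simp)
            omega
  -- STEP 2: basic quantities
  obtain ⟨xM, hxM⟩ := Finite.exists_max q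
  obtain ⟨xm, hxm⟩ := Finite.exists_min q
  set M : ℝ := q xM with hMdef
  have hMpos : 0 < M := hpos xM
  have hs : 0 < ∑ x, q x :=
    Finset.sum_pos (fun x _ => hpos x) ⟨Classical.arbitrary _, Finset.mem_univ _⟩
  set β : ℝ := (∑ x, q x) / n with hβdef
  have hβ : 0 < β := div_pos hs (by exact_mod_cast hn0)
  set z : Fin n → ℝ := fun x => q x - β with hzdef
  have hzsum : ∑ x, z x = 0 := by
    simp only [hzdef]
    rw [Finset.sum_sub_distrib, Finset.sum_const, Finset.card_univ, Fintype.card_fin, hβdef,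
      nsmul_eq_mul]
    have : (n:ℝ) ≠ 0 := by exact_mod_cast hn0.ne'
    field_simp
    ring
  -- STEP 3: μ ≥ d - 2
  have hn2 : (2:ℝ) ≤ (n:ℝ) := by
    have hnt : Nontrivial (Fin n) := ⟨⟨a, b, hab⟩⟩
    have h := Fintype.one_lt_card (α := Fin n)
    rw [Fintype.card_fin] at h
    exact_mod_cast h
  have hμ : (d:ℝ) - 2 ≤ μ := by
    have h1 : (H.adjMatrix ℝ *ᵥ q) xm = μ * q xm := by rw [heig]; rfl
    rw [SimpleGraph.adjMatrix_mulVec_apply] at h1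
    have h2 : ((H.neighborFinset xm).card : ℝ) * q xm ≤ ∑ u ∈ H.neighborFinset xm, q u := by
      calc ((H.neighborFinset xm).card : ℝ) * q xm = ∑ _u ∈ H.neighborFinset xm, q xm := by
            rw [Finset.sum_const, nsmul_eq_mul]
        _ ≤ _ := Finset.sum_le_sum fun u _ => hxm u
    have h3 : (d:ℝ) - 2 ≤ ((H.neighborFinset xm).card : ℝ) := by
      have h := hdeg xm
      have h' : (d:ℝ) ≤ ((H.neighborFinset xm).card : ℝ) + 2 := by exact_mod_cast h
      linarith
    have h4 : ((d:ℝ) - 2) * q xm ≤ μ * q xm := by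
      calc ((d:ℝ)-2) * q xm ≤ ((H.neighborFinset xm).card : ℝ) * q xm :=
            mul_le_mul_of_nonneg_right h3 (le_of_lt (hpos xm))
        _ ≤ ∑ u ∈ H.neighborFinset xm, q u := h2
        _ = μ * q xm := h1
    exact le_of_mul_le_mul_right h4 (hpos xm)
  -- STEP 4: the quadratic form bound
  have hherm : (G.adjMatrix ℝ).IsHermitian := by
    show (G.adjMatrix ℝ)ᴴ = G.adjMatrix ℝ
    rw [Matrix.conjTranspose_eq_transpose_of_trivial, SimpleGraph.transpose_adjMatrix]
  have hevgap : ∀ (lam : ℝ) (v : Fin n → ℝ), v ≠ 0 → G.adjMatrix ℝ *ᵥ v = lam • v →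
      lam ≤ (d:ℝ) - δ ∨ ∀ i' j' : Fin n, v i' = v j' := by
    intro lam v hv0 hvv
    rcases hgap lam v hv0 hvv with h | h
    · right; exact aux_perron G hG hreg v (by rw [← h]; exact hvv)
    · left; exact h
  have hq := aux_quad (G.adjMatrix ℝ) hherm ((d:ℝ) - δ) μ hevgap z hzsum
  set Z : ℝ := ∑ x, z x * z x with hZdef
  have hZ0 : 0 ≤ Z := Finset.sum_nonneg fun x _ => mul_self_nonneg _
  -- STEP 5: compute the right-hand side of hq
  have hAz : ∀ x, (G.adjMatrix ℝ *ᵥ z) x = (G.adjMatrix ℝ *ᵥ q) x - (d:ℝ) * β := by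
    intro x
    rw [SimpleGraph.adjMatrix_mulVec_apply, SimpleGraph.adjMatrix_mulVec_apply]
    simp only [hzdef]
    rw [Finset.sum_sub_distrib, Finset.sum_const,
      SimpleGraph.card_neighborFinset_eq_degree, hreg x, nsmul_eq_mul]
  have hBq : ∀ x, (H.adjMatrix ℝ *ᵥ q) x = μ * q x := fun x => by rw [heig]; rfl
  have hRHS : ∑ x, z x * (μ * z x - (G.adjMatrix ℝ *ᵥ z) x)
      = ε * (z a * q b) + ε * (z b * q a) := by
    have e1 : ∀ x, z x * (μ * z x - (G.adjMatrix ℝ *ᵥ z) x)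
        = z x * ((if x = a then ε * q b else 0) + (if x = b then ε * q a else 0))
          + ((d:ℝ) - μ) * β * z x := by
      intro x
      have h2 := hd x
      rw [hBq x] at h2
      rw [hAz x]
      simp only [hzdef]
      linear_combination (q x - β) * h2
    calc ∑ x, z x * (μ * z x - (G.adjMatrix ℝ *ᵥ z) x)
        = ∑ x, (z x * ((if x = a then ε * q b else 0) + (if x = b then ε * q a else 0))
            + ((d:ℝ) - μ) * β * z x) := Finset.sum_congr rfl fun x _ => e1 x
      _ = ∑ x, z x * ((if x = a then ε * q b else 0) + (if x = b then ε * q a else 0))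
            + ((d:ℝ) - μ) * β * ∑ x, z x := by
          rw [Finset.sum_add_distrib, Finset.mul_sum]
      _ = ε * (z a * q b) + ε * (z b * q a) := by
          rw [hzsum, mul_zero, add_zero]
          have e2 : ∀ x, z x * ((if x = a then ε * q b else 0) + (if x = b then ε * q a else 0))
             = (if x = a then z x * (ε * q b) else 0) + (if x = b then z x * (ε * q a) else 0) := by
            intro x; split_ifs <;> ring
          rw [Finset.sum_congr rfl fun x _ => e2 x, Finset.sum_add_distrib,
            Finset.sum_ite_eq' Finset.univ a, Finset.sum_ite_eq' Finset.univ b]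
          simp only [Finset.mem_univ, if_true]
          ring
  -- STEP 6: key inequalities
  have key1 : (μ - ((d:ℝ) - δ)) * Z ≤ |z a| * q b + |z b| * q a := by
    have h0 : (μ - ((d:ℝ) - δ)) * Z ≤ ε * (z a * q b) + ε * (z b * q a) := by
      rw [← hRHS]; exact hq
    have h1 : ε * (z a * q b) ≤ |z a| * q b := aux_eps hεc (hpos b).le
    have h2 : ε * (z b * q a) ≤ |z b| * q a := aux_eps hεc (hpos a).le
    linarith
  set K : ℝ := δ - 2 with hKdef
  set S : ℝ := Real.sqrt 2 with hSdef
  have hS0 : 0 < S := Real.sqrt_pos.mpr (by norm_num)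
  have hS2 : S^2 = 2 := Real.sq_sqrt (by norm_num)
  have hS1 : 1 < S := by
    rw [hSdef]
    calc (1:ℝ) = Real.sqrt 1 := Real.sqrt_one.symm
      _ < Real.sqrt 2 := Real.sqrt_lt_sqrt (by norm_num) (by norm_num)
  have hsqn : S ≤ Real.sqrt n := by
    rw [hSdef]; exact Real.sqrt_le_sqrt hn2
  have hKc : 2 * S < K * c := by
    have h2 : 2 / c * S ≤ 2 / c * Real.sqrt n := by
      apply mul_le_mul_of_nonneg_left hsqn (by positivity)
    have h3 : 2 / c * Real.sqrt n < K := by rw [hKdef]; linarith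
    have h4 : 2 / c * S < K := lt_of_le_of_lt h2 h3
    calc 2 * S = (2 / c * S) * c := by field_simp
      _ < K * c := mul_lt_mul_of_pos_right h4 hc0
  obtain ⟨hKpos, hKS⟩ := aux_arith hc0 hc1 hS0 hKc
  have hμK : K ≤ μ - ((d:ℝ) - δ) := by rw [hKdef]; linarith
  have hKZW : K * Z ≤ |z a| * q b + |z b| * q a :=
    le_trans (mul_le_mul_of_nonneg_right hμK hZ0) key1
  have hzab : z a * z a + z b * z b ≤ Z := by
    rw [hZdef]
    calc z a * z a + z b * z b = ∑ x ∈ ({a, b} : Finset (Fin n)), z x * z x := by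
          rw [Finset.sum_pair hab]
      _ ≤ ∑ x, z x * z x := Finset.sum_le_sum_of_subset_of_nonneg (Finset.subset_univ _)
          (fun x _ _ => mul_self_nonneg _)
  have hW2 : (|z a| * q b + |z b| * q a)^2 ≤ Z * (2 * M^2) := by
    calc (|z a| * q b + |z b| * q a)^2 ≤ (z a * z a + z b * z b) * (2 * M^2) :=
          aux_cs (hpos a) (hpos b) (hxM a) (hxM b)
      _ ≤ Z * (2 * M^2) := mul_le_mul_of_nonneg_right hzab (by positivity)
  have hZM : K^2 * Z ≤ 2 * M^2 :=
    aux_zm hKpos hZ0 hKZW hW2 (by positivity)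
  have hzx2 : ∀ x, (K * z x)^2 ≤ 2 * M^2 := by
    intro x
    have h1 : z x * z x ≤ Z := by
      rw [hZdef]
      exact Finset.single_le_sum (fun y _ => mul_self_nonneg (z y)) (Finset.mem_univ x)
    calc (K * z x)^2 = K^2 * (z x * z x) := by ring
      _ ≤ K^2 * Z := mul_le_mul_of_nonneg_left h1 (sq_nonneg K)
      _ ≤ 2 * M^2 := hZM
  have hlin : ∀ x, K * z x ≤ S * M ∧ -(S * M) ≤ K * z x := fun x =>
    aux_lin (hzx2 x) hS2 (by positivity)
  -- STEP 7: final assembly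
  have hzM' : z xM = M - β := by simp [hzdef, hMdef]
  have h1 : (K - S) * M ≤ K * β := by
    have h := (hlin xM).1
    rw [hzM'] at h
    exact aux_r1 h
  have h2 : K * β - S * M ≤ K * q j := by
    have h := (hlin j).2
    have hzj : z j = q j - β := rfl
    rw [hzj] at h
    exact aux_r2 h
  have hqiM : q i ≤ M := hxM i
  rw [div_lt_div_iff₀ (hpos j) (by linarith : (0:ℝ) < 1 - c)]
  exact aux_final hc0 hc1 hS0 hKc hβ hMpos h1 h2 hqiM
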